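/- arXiv:2604.02287 — 2 statements merged into one kernel-verified Lean document; each statement's English description precedes it below -/
import Mathlib

section
/- Fix a real A > 1. There exists a constant C > 0 depending only on A such that for every real H > e and every integer N, writing M := max(|N − H|, |N + H|), one has | ∑_{c₀ ∈ ℤ, −H ≤ c₀ ≤ H, c₀ + N ≠ 0} Λ(|c₀ + N|)·log|c₀ + N| − (log M)·∑_{c₀ ∈ ℤ, −H ≤ c₀ ≤ H, c₀ + N ≠ 0} Λ(|c₀ + N|) | ≤ C·( (log log H)·∑_{c₀ ∈ ℤ, −H ≤ c₀ ≤ H, c₀ + N ≠ 0} Λ(|c₀ + N|) + M·(log M)²/(log H)^A ). -/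
open Finset ArithmeticFunction

noncomputable section

open Classical in
/-- Coefficient vectors `(c 0, …, c d)` of polynomials in `Poly(d,H)`:
all coefficients lie in `[-H, H]` and the leading coefficient is positive. -/
def polyBox (d : ℕ) (H : ℝ) : Finset (Fin (d + 1) → ℤ) :=
  (Fintype.piFinset fun _ => Finset.Icc (-⌈H⌉) ⌈H⌉).filter
    fun c => (∀ i, |(c i : ℝ)| ≤ H) ∧ 0 < c (Fin.last d)

/-- Evaluation at `m` of the polynomial with coefficient vector `c`. -/
def evalP {d : ℕ} (c : Fin (d + 1) → ℤ) (m : ℤ) : ℤ := ∑ i, c i * m ^ (i : ℕ)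

/-- `ψ_P(x) = ∑_{1 ≤ n ≤ x, P(n) > 0} Λ(P(n))`. -/
def psiP {d : ℕ} (c : Fin (d + 1) → ℤ) (x : ℝ) : ℝ :=
  ∑ n ∈ Finset.Icc (1 : ℤ) ⌊x⌋, if 0 < evalP c n then Λ (evalP c n).toNat else 0

/-- `ψ^abs_P(x) = ∑_{1 < m ≤ x, P(m) ≠ 0} Λ(|P(m)|)`. -/
def psiAbs {d : ℕ} (c : Fin (d + 1) → ℤ) (x : ℝ) : ℝ :=
  ∑ m ∈ Finset.Icc (2 : ℤ) ⌊x⌋, if evalP c m ≠ 0 then Λ (evalP c m).natAbs else 0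

/-- `ω_P(m)`, the number of roots of `P` modulo `m`. -/
def omegaP {d : ℕ} (c : Fin (d + 1) → ℤ) (m : ℕ) : ℕ :=
  Nat.card {a : ZMod m // (∑ i, (c i : ZMod m) * a ^ (i : ℕ)) = 0}

open Classical in
/-- The truncated Bateman–Horn constant `𝔖_P(z)`. -/
def SP {d : ℕ} (c : Fin (d + 1) → ℤ) (z : ℝ) : ℝ :=
  ∏ ℓ ∈ (Finset.range ⌈z⌉₊).filter fun ℓ : ℕ => ℓ.Prime ∧ (ℓ : ℝ) < z,
    (1 - 1 / (ℓ : ℝ))⁻¹ * (1 - (omegaP c ℓ : ℝ) / ℓ)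

open Classical in
/-- `∏_{primes ℓ < z} (1 + 1/(ℓ(ℓ-1)))`. -/
def primeProd (z : ℝ) : ℝ :=
  ∏ ℓ ∈ (Finset.range ⌈z⌉₊).filter fun ℓ : ℕ => ℓ.Prime ∧ (ℓ : ℝ) < z,
    (1 + 1 / ((ℓ : ℝ) * ((ℓ : ℝ) - 1)))

end


set_option maxHeartbeats 1600000 in
/-- Lemma: replacing `log|c₀+N|` by `log M` in `∑ Λ(|c₀+N|) log|c₀+N|`. -/
theorem stmt_6 (A : ℝ) (hA : 1 < A) :
    ∃ C > 0, ∀ H : ℝ, Real.exp 1 < H → ∀ N : ℤ,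
      |(∑ c₀ ∈ Finset.Icc (-⌊H⌋) ⌊H⌋,
          (if c₀ + N ≠ 0 then Λ (c₀ + N).natAbs * Real.log (c₀ + N).natAbs else 0))
        - Real.log (max |(N : ℝ) - H| |(N : ℝ) + H|) *
          (∑ c₀ ∈ Finset.Icc (-⌊H⌋) ⌊H⌋,
            (if c₀ + N ≠ 0 then Λ (c₀ + N).natAbs else 0))|
      ≤ C * (Real.log (Real.log H) *
            (∑ c₀ ∈ Finset.Icc (-⌊H⌋) ⌊H⌋,
              (if c₀ + N ≠ 0 then Λ (c₀ + N).natAbs else 0))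
          + (max |(N : ℝ) - H| |(N : ℝ) + H|) *
            (Real.log (max |(N : ℝ) - H| |(N : ℝ) + H|)) ^ 2 / Real.log H ^ A) := by
  have hA0 : (0:ℝ) < A := by linarith
  refine ⟨A + 2 + A ^ A, by positivity, ?_⟩
  intro H hH N
  have he1 : (2:ℝ) ≤ Real.exp 1 := by
    have := Real.add_one_le_exp 1; linarith
  have hH1 : (1:ℝ) < H := by linarith
  have hH0 : (0:ℝ) < H := by linarith
  set M := max |(N : ℝ) - H| |(N : ℝ) + H| with hMdef
  have hHM : H ≤ M := by
    have h1 : (N:ℝ) + H ≤ |(N:ℝ) + H| := le_abs_self _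
    have h2 : -((N:ℝ) - H) ≤ |(N:ℝ) - H| := neg_le_abs _
    have h3 : |(N:ℝ) + H| ≤ M := le_max_right _ _
    have h4 : |(N:ℝ) - H| ≤ M := le_max_left _ _
    linarith
  have hM1 : (1:ℝ) < M := lt_of_lt_of_le hH1 hHM
  have hM0 : (0:ℝ) < M := by linarith
  have hlogM : 0 < Real.log M := Real.log_pos hM1
  have hlogH : 1 < Real.log H := by
    rw [Real.lt_log_iff_exp_lt hH0]; exact hH
  have hlogH0 : 0 < Real.log H := by linarith
  have hloglog : 0 < Real.log (Real.log H) := Real.log_pos hlogH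
  have hpow : (0:ℝ) < Real.log H ^ A := Real.rpow_pos_of_pos hlogH0 A
  -- key: (log H)^A ≤ A^A * M
  have hkey : Real.log H ^ A ≤ A ^ A * M := by
    have h1 : Real.log H ≤ H ^ (1/A) / (1/A) :=
      Real.log_le_rpow_div hH0.le (by positivity)
    have h2 : H ^ (1/A) / (1/A) = A * H ^ (1/A) := by
      field_simp
    have h3 : Real.log H ^ A ≤ (A * H ^ (1/A)) ^ A := by
      apply Real.rpow_le_rpow hlogH0.le (by linarith [h1, h2]) hA0.le
    have h4 : (A * H ^ (1/A)) ^ A = A ^ A * H := by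
      rw [Real.mul_rpow hA0.le (Real.rpow_nonneg hH0.le _),
        ← Real.rpow_mul hH0.le, one_div_mul_cancel hA0.ne', Real.rpow_one]
    calc Real.log H ^ A ≤ A ^ A * H := h4 ▸ h3
      _ ≤ A ^ A * M := by
          have : (0:ℝ) < A ^ A := Real.rpow_pos_of_pos hA0 A
          nlinarith
  set T := M / Real.log H ^ A with hTdef
  have hT0 : 0 < T := by positivity
  set s := Finset.Icc (-⌊H⌋) ⌊H⌋ with hs
  set g : ℤ → ℝ := fun c₀ => if c₀ + N ≠ 0 then (Λ (c₀ + N).natAbs : ℝ) else 0 with hg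
  set f : ℤ → ℝ := fun c₀ =>
    if c₀ + N ≠ 0 then Λ (c₀ + N).natAbs * Real.log (c₀ + N).natAbs else 0 with hf
  clear_value M T s g f
  have hg0 : ∀ c₀, 0 ≤ g c₀ := by
    intro c₀; simp only [hg]; split <;> simp [vonMangoldt_nonneg]
  have hgsum : 0 ≤ ∑ c₀ ∈ s, g c₀ := Finset.sum_nonneg fun c _ => hg0 c
  -- pointwise: m ≤ M for c₀ ∈ s
  have hmle : ∀ c₀ ∈ s, ((c₀ + N).natAbs : ℝ) ≤ M := by
    intro c₀ hc
    rw [hs, Finset.mem_Icc] at hc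
    have h1 : ((-⌊H⌋ : ℤ):ℝ) ≤ (c₀:ℝ) := by exact_mod_cast hc.1
    have h2 : (c₀:ℝ) ≤ (⌊H⌋:ℝ) := by exact_mod_cast hc.2
    have hfl : (⌊H⌋:ℝ) ≤ H := Int.floor_le H
    have hc1 : -H ≤ (c₀:ℝ) := by push_cast at h1; linarith
    have hc2 : (c₀:ℝ) ≤ H := by linarith
    have : ((c₀ + N).natAbs : ℝ) = |((c₀ + N : ℤ) : ℝ)| := by
      rw [Nat.cast_natAbs, Int.cast_abs]
    rw [this, abs_le]
    push_cast
    have h3 : |(N:ℝ) + H| ≤ M := by rw [hMdef]; exact le_max_right _ _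
    have h4 : |(N:ℝ) - H| ≤ M := by rw [hMdef]; exact le_max_left _ _
    have h5 : (N:ℝ) + H ≤ |(N:ℝ) + H| := le_abs_self _
    have h6 : -((N:ℝ) - H) ≤ |(N:ℝ) - H| := neg_le_abs _
    constructor <;> linarith
  -- each term of the difference is nonpositive
  have hterm : ∀ c₀ ∈ s, f c₀ - Real.log M * g c₀ ≤ 0 := by
    intro c₀ hc
    simp only [hf, hg]
    split
    · rename_i hne
      have hm1 : 1 ≤ ((c₀ + N).natAbs : ℝ) := by
        have : 1 ≤ (c₀ + N).natAbs := Nat.one_le_iff_ne_zero.mpr (Int.natAbs_ne_zero.mpr hne)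
        exact_mod_cast this
      have hlog : Real.log ((c₀ + N).natAbs : ℝ) ≤ Real.log M :=
        Real.log_le_log (by linarith) (hmle c₀ hc)
      have hΛ : (0:ℝ) ≤ Λ (c₀ + N).natAbs := vonMangoldt_nonneg
      nlinarith
    · simp
  have habs : |(∑ c₀ ∈ s, f c₀) - Real.log M * ∑ c₀ ∈ s, g c₀|
      = ∑ c₀ ∈ s, (Real.log M * g c₀ - f c₀) := by
    rw [Finset.mul_sum, ← Finset.sum_sub_distrib, abs_of_nonpos
      (Finset.sum_nonpos hterm), ← Finset.sum_neg_distrib]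
    exact Finset.sum_congr rfl fun c _ => by ring
  -- split
  set p : ℤ → Prop := fun c₀ => ((c₀ + N).natAbs : ℝ) < T with hp
  have hsplit : ∑ c₀ ∈ s, (Real.log M * g c₀ - f c₀)
      = (∑ c₀ ∈ s.filter p, (Real.log M * g c₀ - f c₀))
      + ∑ c₀ ∈ s.filter (fun c₀ => ¬ p c₀), (Real.log M * g c₀ - f c₀) :=
    (Finset.sum_filter_add_sum_filter_not s p _).symm
  -- large part
  have hlarge : ∑ c₀ ∈ s.filter (fun c₀ => ¬ p c₀), (Real.log M * g c₀ - f c₀)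
      ≤ (A * Real.log (Real.log H)) * ∑ c₀ ∈ s, g c₀ := by
    have hptw : ∀ c₀ ∈ s.filter (fun c₀ => ¬ p c₀),
        Real.log M * g c₀ - f c₀ ≤ (A * Real.log (Real.log H)) * g c₀ := by
      intro c₀ hc
      rw [Finset.mem_filter] at hc
      simp only [hf, hg]
      split
      · rename_i hne
        have hmge : T ≤ ((c₀ + N).natAbs : ℝ) := not_lt.mp hc.2
        have hlogT : Real.log T = Real.log M - A * Real.log (Real.log H) := by
          rw [hTdef, Real.log_div hM0.ne' hpow.ne', Real.log_rpow hlogH0]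
        have hlog : Real.log T ≤ Real.log ((c₀ + N).natAbs : ℝ) :=
          Real.log_le_log hT0 hmge
        have hΛ : (0:ℝ) ≤ Λ (c₀ + N).natAbs := vonMangoldt_nonneg
        nlinarith
      · simp
    calc ∑ c₀ ∈ s.filter (fun c₀ => ¬ p c₀), (Real.log M * g c₀ - f c₀)
        ≤ ∑ c₀ ∈ s.filter (fun c₀ => ¬ p c₀), (A * Real.log (Real.log H)) * g c₀ :=
          Finset.sum_le_sum hptw
      _ ≤ ∑ c₀ ∈ s, (A * Real.log (Real.log H)) * g c₀ := by
          apply Finset.sum_le_sum_of_subset_of_nonneg (Finset.filter_subset _ _)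
          intro c _ _
          exact mul_nonneg (by positivity) (hg0 c)
      _ = (A * Real.log (Real.log H)) * ∑ c₀ ∈ s, g c₀ := by
          rw [Finset.mul_sum]
  -- small part
  have hsmallcard : ((s.filter p).card : ℝ) ≤ 2 * T + 1 := by
    have hsub : s.filter p ⊆ Finset.Icc (-⌊T⌋ - N) (⌊T⌋ - N) := by
      intro c₀ hc
      rw [Finset.mem_filter] at hc
      have h1 : ((c₀ + N).natAbs : ℝ) ≤ T := (hc.2).le
      have h2 : ((c₀ + N).natAbs : ℤ) ≤ ⌊T⌋ := Int.le_floor.mpr (by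
        rw [Int.cast_natCast]; exact h1)
      rw [Finset.mem_Icc]
      omega
    have hfl0 : (0:ℤ) ≤ ⌊T⌋ := Int.floor_nonneg.mpr hT0.le
    have hcard := Finset.card_le_card hsub
    have hcard2 : (Finset.Icc (-⌊T⌋ - N) (⌊T⌋ - N)).card = (2*⌊T⌋ + 1).toNat := by
      rw [Int.card_Icc]; congr 1; ring
    have hTfl : (⌊T⌋ : ℝ) ≤ T := Int.floor_le T
    have : (((2*⌊T⌋ + 1).toNat : ℤ) : ℝ) = ((2*⌊T⌋ + 1 : ℤ) : ℝ) := by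
      rw [Int.toNat_of_nonneg (by omega)]
    calc ((s.filter p).card : ℝ) ≤ (((2*⌊T⌋ + 1).toNat : ℕ) : ℝ) := by
          rw [← hcard2]; exact_mod_cast hcard
      _ = ((2*⌊T⌋ + 1 : ℤ) : ℝ) := by exact_mod_cast this
      _ ≤ 2 * T + 1 := by push_cast; linarith
  have hsmall : ∑ c₀ ∈ s.filter p, (Real.log M * g c₀ - f c₀)
      ≤ (2 * T + 1) * Real.log M ^ 2 := by
    have hptw : ∀ c₀ ∈ s.filter p, Real.log M * g c₀ - f c₀ ≤ Real.log M ^ 2 := by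
      intro c₀ hc
      rw [Finset.mem_filter] at hc
      simp only [hf, hg]
      split
      · rename_i hne
        have hm1 : 1 ≤ ((c₀ + N).natAbs : ℝ) := by
          have : 1 ≤ (c₀ + N).natAbs := Nat.one_le_iff_ne_zero.mpr (Int.natAbs_ne_zero.mpr hne)
          exact_mod_cast this
        have hlog0 : 0 ≤ Real.log ((c₀ + N).natAbs : ℝ) := Real.log_nonneg hm1
        have hlog : Real.log ((c₀ + N).natAbs : ℝ) ≤ Real.log M :=
          Real.log_le_log (by linarith) (hmle c₀ hc.1)
        have hΛ : (0:ℝ) ≤ Λ (c₀ + N).natAbs := vonMangoldt_nonneg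
        have hΛle : (Λ (c₀ + N).natAbs : ℝ) ≤ Real.log ((c₀ + N).natAbs : ℝ) :=
          vonMangoldt_le_log
        nlinarith
      · simp only [sub_zero, mul_zero]; positivity
    calc ∑ c₀ ∈ s.filter p, (Real.log M * g c₀ - f c₀)
        ≤ ∑ c₀ ∈ s.filter p, Real.log M ^ 2 := Finset.sum_le_sum hptw
      _ = ((s.filter p).card : ℝ) * Real.log M ^ 2 := by
          rw [Finset.sum_const, nsmul_eq_mul]
      _ ≤ (2 * T + 1) * Real.log M ^ 2 := by nlinarith [sq_nonneg (Real.log M)]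
  -- assemble
  have hfinal : (2 * T + 1) * Real.log M ^ 2 + (A * Real.log (Real.log H)) * ∑ c₀ ∈ s, g c₀
      ≤ (A + 2 + A ^ A) * (Real.log (Real.log H) * (∑ c₀ ∈ s, g c₀)
          + M * Real.log M ^ 2 / Real.log H ^ A) := by
    have hQ : T * Real.log M ^ 2 = M * Real.log M ^ 2 / Real.log H ^ A := by
      rw [hTdef]; ring
    have hAA : (0:ℝ) < A ^ A := Real.rpow_pos_of_pos hA0 A
    have h1 : Real.log M ^ 2 ≤ A ^ A * (M * Real.log M ^ 2 / Real.log H ^ A) := by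
      rw [mul_div_assoc', le_div_iff₀ hpow]
      refine le_trans (mul_le_mul_of_nonneg_left hkey (sq_nonneg (Real.log M)))
        (le_of_eq (by ring))
    have h2 : 0 ≤ M * Real.log M ^ 2 / Real.log H ^ A := by positivity
    have hLS : 0 ≤ Real.log (Real.log H) * ∑ c₀ ∈ s, g c₀ :=
      mul_nonneg hloglog.le hgsum
    have key : ∀ a b Q X LS : ℝ, 1 < a → 0 < b → 0 ≤ Q → 0 ≤ LS → X ≤ b * Q →
        2 * Q + X + a * LS ≤ (a + 2 + b) * (LS + Q) := by
      intro a b Q X LS h1 h2 h3 h4 h5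
      nlinarith [mul_nonneg (by linarith : (0:ℝ) ≤ 2 + b) h4,
        mul_nonneg (by linarith : (0:ℝ) ≤ a) h3]
    have hk := key A (A ^ A) (M * Real.log M ^ 2 / Real.log H ^ A) (Real.log M ^ 2)
      (Real.log (Real.log H) * ∑ c₀ ∈ s, g c₀) hA hAA h2 hLS h1
    linarith [hk, hQ]
  rw [habs, hsplit]
  exact le_trans (add_le_add hsmall hlarge) hfinal
end

section
/- Fix an integer d ≥ 2. For every squarefree positive integer k one has the identity (in ℚ): ∑_{(c₀, …, c_d) ∈ (ℤ/kℤ)^{d+1}} ∏_{primes ℓ ∣ k} ( 2·ω_{P_c}(ℓ)/ℓ − ω_{P_c}(ℓ)²/ℓ² ) = ∏_{primes ℓ ∣ k} ( 2ℓ^d − 2ℓ^{d−1} + ℓ^{d−2} ), where P_c ∈ ℤ[t] is any lift of the polynomial c_d t^d + … + c₀ with coefficients in ℤ/kℤ. -/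
open Finset ArithmeticFunction

section KerCount

private lemma card_ker_eq {G H : Type*} [AddCommGroup G] [AddCommGroup H] (f : G →+ H)
    (hf : Function.Surjective f) :
    Nat.card G = Nat.card H * Nat.card {x : G // f x = 0} := by
  have h1 := AddSubgroup.card_eq_card_quotient_mul_card_addSubgroup f.ker
  rw [Nat.card_congr (QuotientAddGroup.quotientKerEquivOfSurjective f hf).toEquiv] at h1
  rw [h1]
  have h2 : Nat.card f.ker = Nat.card {x : G // f x = 0} :=
    Nat.card_congr (Equiv.subtypeEquivRight fun x => f.mem_ker)
  rw [h2]

variable {F : Type*} [Field F] [Fintype F] [DecidableEq F]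

private def evalHom (n : ℕ) (a : F) : (Fin n → F) →+ F where
  toFun c := ∑ i, c i * a ^ (i : ℕ)
  map_zero' := by simp
  map_add' c d := by simp [add_mul, Finset.sum_add_distrib]

private lemma evalHom_apply (n : ℕ) (a : F) (c : Fin n → F) :
    evalHom n a c = ∑ i, c i * a ^ (i : ℕ) := rfl

private lemma evalHom_single (n : ℕ) (a : F) (j : Fin n) (x : F) :
    evalHom n a (Pi.single j x) = x * a ^ (j : ℕ) := by
  classical
  rw [evalHom_apply]
  rw [Finset.sum_eq_single j]
  · simp
  · intro i _ hij; simp [Pi.single_eq_of_ne hij]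
  · simp

private lemma evalHom_surj (n : ℕ) (hn : 0 < n) (a : F) :
    Function.Surjective (evalHom n a) := by
  intro v
  refine ⟨Pi.single ⟨0, hn⟩ v, ?_⟩
  simp [evalHom_single]

private lemma card_sol_one (d : ℕ) (a : F) :
    Nat.card {c : Fin (d + 1) → F // ∑ i, c i * a ^ (i : ℕ) = 0} = Fintype.card F ^ d := by
  have h := card_ker_eq (evalHom (d + 1) a) (evalHom_surj (d + 1) (Nat.succ_pos d) a)
  have hG : Nat.card (Fin (d + 1) → F) = Fintype.card F ^ (d + 1) := by
    simp [Nat.card_eq_fintype_card]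
  rw [hG, Nat.card_eq_fintype_card (α := F), pow_succ'] at h
  have hq : 0 < Fintype.card F := Fintype.card_pos
  exact (Nat.eq_of_mul_eq_mul_left hq h).symm

private lemma card_sol_two (d : ℕ) (hd : 2 ≤ d) (a b : F) (hab : a ≠ b) :
    Nat.card {c : Fin (d + 1) → F //
        (∑ i, c i * a ^ (i : ℕ)) = 0 ∧ (∑ i, c i * b ^ (i : ℕ)) = 0}
      = Fintype.card F ^ (d - 1) := by
  classical
  have hq : 0 < Fintype.card F ^ 2 := pow_pos Fintype.card_pos 2
  have hpow : Fintype.card F ^ (d + 1) = Fintype.card F ^ 2 * Fintype.card F ^ (d - 1) := by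
    have h2 : 2 + (d - 1) = d + 1 := by omega
    rw [← pow_add, h2]
  set f := (evalHom (d + 1) a).prod (evalHom (d + 1) b) with hf
  have hsurj : Function.Surjective f := by
    have h1 : ((1 : Fin (d + 1)) : ℕ) = 1 := by
      rw [Fin.val_one']
      exact Nat.mod_eq_of_lt (by omega)
    have hab' : a - b ≠ 0 := sub_ne_zero.mpr hab
    rintro ⟨u, v⟩
    refine ⟨Pi.single 0 (u - (u - v) / (a - b) * a) + Pi.single 1 ((u - v) / (a - b)), ?_⟩
    rw [hf]
    simp only [AddMonoidHom.prod_apply, map_add, evalHom_single, Prod.mk.injEq, h1,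
      Fin.val_zero, pow_zero, pow_one, mul_one]
    rw [Prod.mk_add_mk, Prod.mk.injEq]
    constructor
    · field_simp
      ring
    · field_simp
      ring
  have h := card_ker_eq f hsurj
  have hG : Nat.card (Fin (d + 1) → F) = Fintype.card F ^ (d + 1) := by
    simp [Nat.card_eq_fintype_card]
  have hH : Nat.card (F × F) = Fintype.card F ^ 2 := by
    simp [Nat.card_eq_fintype_card, sq]
  have hker : Nat.card {x : Fin (d + 1) → F // f x = 0}
      = Nat.card {c : Fin (d + 1) → F //
          (∑ i, c i * a ^ (i : ℕ)) = 0 ∧ (∑ i, c i * b ^ (i : ℕ)) = 0} := by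
    have hiff : ∀ c : Fin (d + 1) → F, f c = 0 ↔
        ((∑ i, c i * a ^ (i : ℕ)) = 0 ∧ (∑ i, c i * b ^ (i : ℕ)) = 0) := by
      intro c
      rw [hf]
      simp [Prod.ext_iff, evalHom_apply]
    exact Nat.card_congr (Equiv.subtypeEquivRight hiff)
  rw [hG, hH, hker, hpow] at h
  exact (Nat.eq_of_mul_eq_mul_left hq h).symm

end KerCount

section LocalSum

private lemma natCard_subtype {α : Type*} [Fintype α] (p : α → Prop) [DecidablePred p] :
    Nat.card {x : α // p x} = (Finset.univ.filter p).card := by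
  rw [Nat.card_eq_fintype_card, Fintype.card_subtype]

private lemma local_sum (d : ℕ) (hd : 2 ≤ d) (ℓ : ℕ) [NeZero ℓ] (hℓ : ℓ.Prime) :
    ∑ c : Fin (d + 1) → ZMod ℓ,
      (2 * (Nat.card {a : ZMod ℓ // (∑ i, c i * a ^ (i : ℕ)) = 0} : ℚ) / (ℓ : ℚ)
        - (Nat.card {a : ZMod ℓ // (∑ i, c i * a ^ (i : ℕ)) = 0} : ℚ) ^ 2 / (ℓ : ℚ) ^ 2)
      = 2 * (ℓ : ℚ) ^ d - 2 * (ℓ : ℚ) ^ (d - 1) + (ℓ : ℚ) ^ (d - 2) := by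
  classical
  haveI : Fact ℓ.Prime := ⟨hℓ⟩
  have hcard : Fintype.card (ZMod ℓ) = ℓ := ZMod.card ℓ
  set N : (Fin (d + 1) → ZMod ℓ) → ℕ :=
    fun c => Nat.card {a : ZMod ℓ // (∑ i, c i * a ^ (i : ℕ)) = 0} with hN
  have hNsum : ∀ c, (N c : ℚ)
      = ∑ a : ZMod ℓ, if (∑ i, c i * a ^ (i : ℕ)) = 0 then (1 : ℚ) else 0 := by
    intro c
    simp only [hN]
    rw [natCard_subtype, Finset.card_filter]
    push_cast
    rfl
  -- counts over c for fixed a (and pairs a,b)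
  have hone : ∀ a : ZMod ℓ,
      (∑ c : Fin (d + 1) → ZMod ℓ, if (∑ i, c i * a ^ (i : ℕ)) = 0 then (1 : ℚ) else 0)
        = (ℓ : ℚ) ^ d := by
    intro a
    rw [Finset.sum_boole]
    rw [← Fintype.card_subtype, ← Nat.card_eq_fintype_card, card_sol_one d a, hcard]
    push_cast
    rfl
  have htwo : ∀ a b : ZMod ℓ, a ≠ b →
      (∑ c : Fin (d + 1) → ZMod ℓ,
        if ((∑ i, c i * a ^ (i : ℕ)) = 0 ∧ (∑ i, c i * b ^ (i : ℕ)) = 0) then (1 : ℚ) else 0)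
        = (ℓ : ℚ) ^ (d - 1) := by
    intro a b hab
    rw [Finset.sum_boole]
    rw [← Fintype.card_subtype, ← Nat.card_eq_fintype_card, card_sol_two d hd a b hab, hcard]
    push_cast
    rfl
  have hS1 : (∑ c : Fin (d + 1) → ZMod ℓ, (N c : ℚ)) = (ℓ : ℚ) ^ (d + 1) := by
    simp_rw [hNsum]
    rw [Finset.sum_comm]
    rw [Finset.sum_congr rfl fun a _ => hone a]
    rw [Finset.sum_const, Finset.card_univ, hcard, nsmul_eq_mul, pow_succ']
  have hS2 : (∑ c : Fin (d + 1) → ZMod ℓ, (N c : ℚ) ^ 2)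
      = 2 * (ℓ : ℚ) ^ (d + 1) - (ℓ : ℚ) ^ d := by
    have hsplit : ∀ c, (N c : ℚ) ^ 2 = ∑ a : ZMod ℓ, ∑ b : ZMod ℓ,
        if ((∑ i, c i * a ^ (i : ℕ)) = 0 ∧ (∑ i, c i * b ^ (i : ℕ)) = 0) then (1 : ℚ) else 0 := by
      intro c
      rw [sq, hNsum, Finset.sum_mul_sum]
      apply Finset.sum_congr rfl; intro a _
      apply Finset.sum_congr rfl; intro b _
      by_cases h1 : (∑ i, c i * a ^ (i : ℕ)) = 0 <;>
        by_cases h2 : (∑ i, c i * b ^ (i : ℕ)) = 0 <;> simp [h1, h2]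
    simp_rw [hsplit]
    rw [Finset.sum_comm]
    have hswap : ∀ a : ZMod ℓ, (∑ c : Fin (d + 1) → ZMod ℓ, ∑ b : ZMod ℓ,
        if ((∑ i, c i * a ^ (i : ℕ)) = 0 ∧ (∑ i, c i * b ^ (i : ℕ)) = 0) then (1 : ℚ) else 0)
        = (ℓ : ℚ) ^ d + ((ℓ : ℚ) - 1) * (ℓ : ℚ) ^ (d - 1) := by
      intro a
      rw [Finset.sum_comm]
      have hdiag : (∑ c : Fin (d + 1) → ZMod ℓ,
          if ((∑ i, c i * a ^ (i : ℕ)) = 0 ∧ (∑ i, c i * a ^ (i : ℕ)) = 0) then (1 : ℚ) else 0)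
          = (ℓ : ℚ) ^ d := by
        rw [← hone a]
        apply Finset.sum_congr rfl; intro c _
        simp
      rw [← Finset.add_sum_erase _ _ (Finset.mem_univ a), hdiag]
      congr 1
      rw [Finset.sum_congr rfl fun b hb =>
        htwo a b (Ne.symm (Finset.ne_of_mem_erase hb))]
      rw [Finset.sum_const, Finset.card_erase_of_mem (Finset.mem_univ a),
        Finset.card_univ, hcard, nsmul_eq_mul]
      congr 1
      have h1 : 1 ≤ ℓ := hℓ.one_lt.le.trans' (by omega)
      push_cast [Nat.cast_sub h1]
      ring
    rw [Finset.sum_congr rfl fun a _ => hswap a]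
    rw [Finset.sum_const, Finset.card_univ, hcard, nsmul_eq_mul]
    obtain ⟨e, rfl⟩ := Nat.exists_eq_add_of_le hd
    have e1 : 2 + e - 1 = e + 1 := by omega
    have e2 : 2 + e + 1 = e + 3 := by omega
    have e3 : 2 + e = e + 2 := by omega
    rw [e1, e2, e3]
    ring
  have hmain : (∑ c : Fin (d + 1) → ZMod ℓ,
      (2 * (N c : ℚ) / (ℓ : ℚ) - (N c : ℚ) ^ 2 / (ℓ : ℚ) ^ 2))
      = 2 * ((ℓ : ℚ) ^ (d + 1)) / ℓ - (2 * (ℓ : ℚ) ^ (d + 1) - (ℓ : ℚ) ^ d) / (ℓ : ℚ) ^ 2 := by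
    rw [Finset.sum_sub_distrib, ← Finset.sum_div, ← Finset.sum_div, ← Finset.mul_sum, hS1, hS2]
  rw [hmain]
  obtain ⟨e, rfl⟩ := Nat.exists_eq_add_of_le hd
  have e1 : 2 + e - 1 = e + 1 := by omega
  have e2 : 2 + e + 1 = e + 3 := by omega
  have e3 : 2 + e - 2 = e := by omega
  have e4 : 2 + e = e + 2 := by omega
  rw [e1, e2, e3, e4]
  have hℓ0 : (ℓ : ℚ) ≠ 0 := by exact_mod_cast hℓ.pos.ne'
  field_simp
  ring

end LocalSum


private noncomputable def Gfun (d ℓ : ℕ) (v : Fin (d + 1) → ZMod ℓ) : ℚ :=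
  2 * (Nat.card {a : ZMod ℓ // (∑ i, v i * a ^ (i : ℕ)) = 0} : ℚ) / (ℓ : ℚ)
    - (Nat.card {a : ZMod ℓ // (∑ i, v i * a ^ (i : ℕ)) = 0} : ℚ) ^ 2 / (ℓ : ℚ) ^ 2

/-- Lemma: a local computation for `∑_P 𝔖_P²`. -/
theorem stmt_15 (d : ℕ) (hd : 2 ≤ d) (k : ℕ) (hk : 0 < k) (hsq : Squarefree k) :
    (∑ c : Fin (d + 1) → Fin k,
        ∏ ℓ ∈ k.primeFactors,
          (2 * (omegaP (fun i => ((c i : ℕ) : ℤ)) ℓ : ℚ) / (ℓ : ℚ)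
            - (omegaP (fun i => ((c i : ℕ) : ℤ)) ℓ : ℚ) ^ 2 / (ℓ : ℚ) ^ 2))
      = ∏ ℓ ∈ k.primeFactors,
          (2 * (ℓ : ℚ) ^ d - 2 * (ℓ : ℚ) ^ (d - 1) + (ℓ : ℚ) ^ (d - 2)) := by
  classical
  set S := k.primeFactors with hSdef
  have hprimes : ∀ ℓ ∈ S, ℓ.Prime := fun ℓ hℓ => Nat.prime_of_mem_primeFactors hℓ
  haveI : ∀ ℓ : {x // x ∈ S}, NeZero (ℓ : ℕ) := fun ℓ => ⟨(hprimes ℓ ℓ.2).pos.ne'⟩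
  have hprodk : ∏ ℓ ∈ S, ℓ = k := Nat.prod_primeFactors_of_squarefree hsq
  -- Step 1: rewrite summand using Gfun
  have step1 : ∀ c : Fin (d + 1) → Fin k, ∀ ℓ ∈ S,
      (2 * (omegaP (fun i => ((c i : ℕ) : ℤ)) ℓ : ℚ) / (ℓ : ℚ)
        - (omegaP (fun i => ((c i : ℕ) : ℤ)) ℓ : ℚ) ^ 2 / (ℓ : ℚ) ^ 2)
      = Gfun d ℓ (fun i => ((c i : ℕ) : ZMod ℓ)) := by
    intro c ℓ _
    simp only [Gfun, omegaP, Int.cast_natCast]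
  -- The CRT bijection
  set Φ : (Fin (d + 1) → Fin k) → (∀ ℓ : {x // x ∈ S}, Fin (d + 1) → ZMod (ℓ : ℕ)) :=
    fun c ℓ i => ((c i : ℕ) : ZMod (ℓ : ℕ)) with hΦdef
  have hΦinj : Function.Injective Φ := by
    intro c c' hcc
    funext i
    have hmod : ∀ ℓ ∈ S, ((c i : ℕ) : ZMod ℓ) = ((c' i : ℕ) : ZMod ℓ) := by
      intro ℓ hℓ
      exact congrFun (congrFun hcc ⟨ℓ, hℓ⟩) i
    have hdvd : ∀ ℓ ∈ S, ℓ ∣ (((c' i : ℕ) : ℤ) - ((c i : ℕ) : ℤ)).natAbs := by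
      intro ℓ hℓ
      have := (ZMod.natCast_eq_natCast_iff _ _ _).mp (hmod ℓ hℓ)
      have h2 := (Nat.modEq_iff_dvd (n := ℓ)).mp this
      exact Int.natCast_dvd_natCast.mp ((Int.dvd_natAbs).mpr h2)
    have hkdvd : k ∣ (((c' i : ℕ) : ℤ) - ((c i : ℕ) : ℤ)).natAbs := by
      have hp := Finset.prod_primes_dvd (s := S)
        ((((c' i : ℕ) : ℤ) - ((c i : ℕ) : ℤ)).natAbs)
        (fun p hp => Nat.prime_iff.mp (hprimes p hp)) hdvd
      rwa [hprodk] at hp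
    have hmodk : (c i : ℕ) ≡ (c' i : ℕ) [MOD k] :=
      (Nat.modEq_iff_dvd).mpr (Int.dvd_natAbs.mp (Int.natCast_dvd_natCast.mpr hkdvd))
    have : (c i : ℕ) = (c' i : ℕ) := by
      have h1 : (c i : ℕ) % k = (c' i : ℕ) % k := hmodk
      rwa [Nat.mod_eq_of_lt (c i).2, Nat.mod_eq_of_lt (c' i).2] at h1
    exact Fin.ext this
  have hΦbij : Function.Bijective Φ := by
    rw [Fintype.bijective_iff_injective_and_card]
    refine ⟨hΦinj, ?_⟩
    simp only [Fintype.card_pi, ZMod.card, Finset.prod_const, Finset.card_univ,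
      Fintype.card_fin]
    rw [Finset.prod_coe_sort S (fun ℓ => ℓ ^ (d + 1)), Finset.prod_pow, hprodk]
  have key : ∀ ℓ : {x // x ∈ S}, (∑ v : Fin (d + 1) → ZMod (ℓ : ℕ), Gfun d ℓ v)
      = 2 * ((ℓ : ℕ) : ℚ) ^ d - 2 * ((ℓ : ℕ) : ℚ) ^ (d - 1) + ((ℓ : ℕ) : ℚ) ^ (d - 2) := by
    intro ℓ
    have h := local_sum d hd ℓ (hprimes ℓ ℓ.2)
    rw [← h]
    apply Finset.sum_congr rfl
    intro v _
    simp only [Gfun]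
  calc
    (∑ c : Fin (d + 1) → Fin k,
        ∏ ℓ ∈ S,
          (2 * (omegaP (fun i => ((c i : ℕ) : ℤ)) ℓ : ℚ) / (ℓ : ℚ)
            - (omegaP (fun i => ((c i : ℕ) : ℤ)) ℓ : ℚ) ^ 2 / (ℓ : ℚ) ^ 2))
        = ∑ c : Fin (d + 1) → Fin k,
            ∏ ℓ ∈ S, Gfun d ℓ (fun i => ((c i : ℕ) : ZMod ℓ)) :=
      Finset.sum_congr rfl fun c _ => Finset.prod_congr rfl (step1 c)
    _ = ∑ c : Fin (d + 1) → Fin k, ∏ ℓ : {x // x ∈ S}, Gfun d ℓ (Φ c ℓ) :=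
      Finset.sum_congr rfl fun c _ => (Finset.prod_coe_sort S _).symm
    _ = ∑ p : (∀ ℓ : {x // x ∈ S}, Fin (d + 1) → ZMod (ℓ : ℕ)),
          ∏ ℓ : {x // x ∈ S}, Gfun d ℓ (p ℓ) :=
      Fintype.sum_bijective Φ hΦbij _ _ (fun c => rfl)
    _ = ∏ ℓ : {x // x ∈ S}, ∑ v : Fin (d + 1) → ZMod (ℓ : ℕ), Gfun d ℓ v := by
      rw [Finset.prod_univ_sum, Fintype.piFinset_univ]
    _ = ∏ ℓ : {x // x ∈ S},
          (2 * ((ℓ : ℕ) : ℚ) ^ d - 2 * ((ℓ : ℕ) : ℚ) ^ (d - 1) + ((ℓ : ℕ) : ℚ) ^ (d - 2)) :=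
      Finset.prod_congr rfl fun ℓ _ => key ℓ
    _ = ∏ ℓ ∈ S, (2 * (ℓ : ℚ) ^ d - 2 * (ℓ : ℚ) ^ (d - 1) + (ℓ : ℚ) ^ (d - 2)) :=
      Finset.prod_coe_sort S
        (fun ℓ => (2 * (ℓ : ℚ) ^ d - 2 * (ℓ : ℚ) ^ (d - 1) + (ℓ : ℚ) ^ (d - 2)))
end
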